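/- Let C = (C,≤,⊙,→,',0,1) be a commutative unsharp residuated poset and define x + y := (x'⊙y')' (defined iff x ≤ y'), making (C,+,',0,1) an effect algebra. Then the induced order of this effect algebra (a ≤ₑ b iff there exists z with a+z = b) coincides with the order ≤ of C. -/

import Mathlib

namespace Paper

variable {E : Type*}

/-- The lower cone `L(S)` of a subset w.r.t. an order relation. -/
def lcone (le : E → E → Prop) (S : Set E) : Set E := {x | ∀ y ∈ S, le x y}

/-- The upper cone `U(S)` of a subset w.r.t. an order relation. -/
def ucone (le : E → E → Prop) (S : Set E) : Set E := {x | ∀ y ∈ S, le y x}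

/-- `S ≤ T` for subsets: every element of `S` is below every element of `T`. -/
def setLE (le : E → E → Prop) (S T : Set E) : Prop := ∀ x ∈ S, ∀ y ∈ T, le x y

/-- Effect algebra axioms (E1)-(E4); the partial operation `+` is encoded via `Option`
(`add x y = some z` means `x + y` is defined with value `z`). -/
structure IsEffectAlgebra (add : E → E → Option E) (compl : E → E)
    (zero one : E) : Prop where
  /-- (E1) -/
  comm : ∀ x y, add x y = add y x
  /-- (E2) -/
  assoc : ∀ x y z, (add x y).bind (fun u => add u z) = (add y z).bind (fun v => add x v)
  /-- (E3): `x'` is the unique `u` with `x + u = 1`. -/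
  compl_iff : ∀ x u, add x u = some one ↔ u = compl x
  /-- (E4) -/
  one_add : ∀ x y, add one x = some y → x = zero

/-- The induced order: `x ≤ y` iff there is `z` with `x + z = y`. -/
def eaLe (add : E → E → Option E) (x y : E) : Prop := ∃ z, add x z = some y

/-- `x + A := {x + a : a ∈ A}`. -/
def addLSet (add : E → E → Option E) (x : E) (S : Set E) : Set E :=
  {z | ∃ a ∈ S, add x a = some z}

/-- `A + x := {a + x : a ∈ A}`. -/
def addRSet (add : E → E → Option E) (S : Set E) (x : E) : Set E :=
  {z | ∃ a ∈ S, add a x = some z}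

/-- A monotonous effect algebra: for every `x` and nonempty `A`, `B`, if `A ∪ B ≤ x'`
and `L(A) ≤ U(B)`, then `L(x + A) ≤ U(x + B)`. -/
def Monotonous (add : E → E → Option E) (compl : E → E) : Prop :=
  ∀ (x : E) (A B : Set E), A.Nonempty → B.Nonempty →
    (∀ a ∈ A ∪ B, eaLe add a (compl x)) →
    setLE (eaLe add) (lcone (eaLe add) A) (ucone (eaLe add) B) →
    setLE (eaLe add) (lcone (eaLe add) (addLSet add x A)) (ucone (eaLe add) (addLSet add x B))

/-- The multiplication `x ⊙ y := (x' + y')'` derived from an effect algebra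
(defined iff `x' + y'` is, i.e. iff `x' ≤ y`). -/
def eaOdot (add : E → E → Option E) (compl : E → E) (x y : E) : Option E :=
  (add (compl x) (compl y)).map compl

/-- The implication `x → y := x' + L(x,y)` derived from an effect algebra. -/
def eaImp (add : E → E → Option E) (compl : E → E) (x y : E) : Set E :=
  addLSet add (compl x) (lcone (eaLe add) {x, y})

/-- `S ⊙ y := {s ⊙ y : s ∈ S}`. -/
def odotLSet (odot : E → E → Option E) (S : Set E) (y : E) : Set E :=
  {w | ∃ s ∈ S, odot s y = some w}

/-- `y ⊙ S := {y ⊙ s : s ∈ S}`. -/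
def odotRSet (odot : E → E → Option E) (y : E) (S : Set E) : Set E :=
  {w | ∃ s ∈ S, odot y s = some w}

/-- Commutative unsharp residuated poset, axioms (C1)-(C4); `⊙` is a partial
operation encoded via `Option` and `→` maps pairs to subsets. -/
structure IsCURP (le : E → E → Prop) (odot : E → E → Option E) (imp : E → E → Set E)
    (compl : E → E) (zero one : E) : Prop where
  /-- (C1): bounded poset … -/
  le_refl : ∀ x, le x x
  le_antisymm : ∀ x y, le x y → le y x → x = y
  le_trans : ∀ x y z, le x y → le y z → le x z
  zero_le : ∀ x, le zero x
  le_one : ∀ x, le x one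
  /-- (C1): … with an antitone involution. -/
  compl_compl : ∀ x, compl (compl x) = x
  compl_antitone : ∀ x y, le x y → le (compl y) (compl x)
  /-- (C2): `x ⊙ y` is defined iff `x' ≤ y`. -/
  odot_defined : ∀ x y, (odot x y).isSome ↔ le (compl x) y
  /-- (C2): partial commutative monoid. -/
  odot_comm : ∀ x y, odot x y = odot y x
  odot_assoc : ∀ x y z, (odot x y).bind (fun u => odot u z) = (odot y z).bind (fun v => odot x v)
  odot_one : ∀ x, odot x one = some x
  one_odot : ∀ x, odot one x = some x
  /-- (C2): `z' ≤ x ≤ y` implies `x ⊙ z ≤ y ⊙ z`. -/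
  odot_mono : ∀ x y z a b, le (compl z) x → le x y →
    odot x z = some a → odot y z = some b → le a b
  /-- (C3): unsharp adjointness. -/
  adjoint : ∀ x y z,
    setLE le (lcone le (odotLSet odot (ucone le {x, compl y}) y))
      (ucone le (lcone le {y, z})) ↔
    setLE le (lcone le (ucone le {x, compl y})) (ucone le (imp y z))
  /-- (C4) -/
  imp_zero : ∀ x, imp x zero = {compl x}

/-- Divisibility: `x ≤ y` implies `y ⊙ (y → x) = L(x)`. -/
def CURPDivisible (le : E → E → Prop) (odot : E → E → Option E)
    (imp : E → E → Set E) : Prop :=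
  ∀ x y, le x y → odotRSet odot y (imp y x) = lcone le {x}

/-- Pseudoeffect algebra axioms (P1)-(P4); `x̄ = lc x`, `x̃ = rc x`. -/
structure IsPEA (add : E → E → Option E) (lc rc : E → E) (zero one : E) : Prop where
  /-- (P1): if `x + y` is defined then `u + x = x + y` for some `u` … -/
  exists_left : ∀ x y z, add x y = some z → ∃ u, add u x = some z
  /-- (P1): … and `y + w = x + y` for some `w`. -/
  exists_right : ∀ x y z, add x y = some z → ∃ w, add y w = some z
  /-- (P2) -/
  assoc : ∀ x y z, (add x y).bind (fun u => add u z) = (add y z).bind (fun v => add x v)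
  /-- (P3): `x̄` is the unique `u` with `u + x = 1`. -/
  lc_iff : ∀ x u, add u x = some one ↔ u = lc x
  /-- (P3): `x̃` is the unique `w` with `x + w = 1`. -/
  rc_iff : ∀ x w, add x w = some one ↔ w = rc x
  /-- (P4) -/
  one_add : ∀ x y, add one x = some y → x = zero
  add_one : ∀ x y, add x one = some y → x = zero

/-- A pseudoeffect algebra is good if `(x̄ + ȳ)˜ = (x̃ + ỹ)‾` whenever `x̃ ≤ y`. -/
def Good (add : E → E → Option E) (lc rc : E → E) : Prop :=
  ∀ x y, eaLe add (rc x) y →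
    (add (lc x) (lc y)).map rc = (add (rc x) (rc y)).map lc

/-- A monotonous pseudoeffect algebra. -/
def PEAMonotonous (add : E → E → Option E) (lc rc : E → E) : Prop :=
  (∀ (x : E) (A B : Set E), A.Nonempty → B.Nonempty →
    (∀ a ∈ A ∪ B, eaLe add a (lc x)) →
    setLE (eaLe add) (lcone (eaLe add) A) (ucone (eaLe add) B) →
    setLE (eaLe add) (lcone (eaLe add) (addRSet add A x))
      (ucone (eaLe add) (addRSet add B x))) ∧
  (∀ (x : E) (A B : Set E), A.Nonempty → B.Nonempty →
    (∀ a ∈ A ∪ B, eaLe add a (rc x)) →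
    setLE (eaLe add) (lcone (eaLe add) A) (ucone (eaLe add) B) →
    setLE (eaLe add) (lcone (eaLe add) (addLSet add x A))
      (ucone (eaLe add) (addLSet add x B)))

/-- The multiplication `x ⊙ y := (x̄ + ȳ)˜` derived from a pseudoeffect algebra. -/
def peaOdot (add : E → E → Option E) (lc rc : E → E) (x y : E) : Option E :=
  (add (lc x) (lc y)).map rc

/-- The implication `x → y := x̄ + L(x,y)` derived from a pseudoeffect algebra. -/
def peaImp (add : E → E → Option E) (lc : E → E) (x y : E) : Set E :=
  {z | ∃ c ∈ lcone (eaLe add) {x, y}, add (lc x) c = some z}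

/-- The implication `x ⇝ y := L(x,y) + x̃` derived from a pseudoeffect algebra. -/
def peaImpW (add : E → E → Option E) (rc : E → E) (x y : E) : Set E :=
  {z | ∃ c ∈ lcone (eaLe add) {x, y}, add c (rc x) = some z}

/-- Unsharp residuated poset, axioms (R1)-(R7); `x̄ = lc x`, `x̃ = rc x`. -/
structure IsURP (le : E → E → Prop) (odot : E → E → Option E)
    (imp impW : E → E → Set E) (lc rc : E → E) (zero one : E) : Prop where
  /-- (R1): bounded poset. -/
  le_refl : ∀ x, le x x
  le_antisymm : ∀ x y, le x y → le y x → x = y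
  le_trans : ∀ x y z, le x y → le y z → le x z
  zero_le : ∀ x, le zero x
  le_one : ∀ x, le x one
  /-- (R2) -/
  rc_lc : ∀ x, rc (lc x) = x
  lc_rc : ∀ x, lc (rc x) = x
  lc_antitone : ∀ x y, le x y → le (lc y) (lc x)
  rc_antitone : ∀ x y, le x y → le (rc y) (rc x)
  /-- (R3): `x ⊙ y` is defined iff `x̃ ≤ y`. -/
  odot_defined : ∀ x y, (odot x y).isSome ↔ le (rc x) y
  /-- (R3): partial monoid. -/
  odot_assoc : ∀ x y z, (odot x y).bind (fun u => odot u z) = (odot y z).bind (fun v => odot x v)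
  odot_one : ∀ x, odot x one = some x
  one_odot : ∀ x, odot one x = some x
  /-- (R3): `z̄ ≤ x ≤ y` implies `x ⊙ z ≤ y ⊙ z`. -/
  odot_rmono : ∀ x y z a b, le (lc z) x → le x y →
    odot x z = some a → odot y z = some b → le a b
  /-- (R3): `z̃ ≤ x ≤ y` implies `z ⊙ x ≤ z ⊙ y`. -/
  odot_lmono : ∀ x y z a b, le (rc z) x → le x y →
    odot z x = some a → odot z y = some b → le a b
  /-- (R4) -/
  adjoint_r : ∀ x y z,
    setLE le (lcone le (odotLSet odot (ucone le {x, lc y}) y))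
      (ucone le (lcone le {y, z})) ↔
    setLE le (lcone le (ucone le {x, lc y})) (ucone le (imp y z))
  /-- (R5) -/
  adjoint_l : ∀ x y z,
    setLE le (lcone le (odotRSet odot y (ucone le {x, rc y})))
      (ucone le (lcone le {y, z})) ↔
    setLE le (lcone le (ucone le {x, rc y})) (ucone le (impW y z))
  /-- (R6) -/
  imp_zero : ∀ x, imp x zero = {lc x}
  impW_zero : ∀ x, impW x zero = {rc x}
  /-- (R7) -/
  compat : ∀ x y, (odot (lc x) (lc y)).map rc = (odot (rc x) (rc y)).map lc

section Aux

variable {le : E → E → Prop} {odot : E → E → Option E} {imp : E → E → Set E}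
  {compl : E → E} {zero one : E}

/-- `y' ⊙ y = 0` in a CURP. -/
lemma IsCURP.odot_compl_self (h : IsCURP le odot imp compl zero one) (y : E) :
    odot (compl y) y = some zero := by
  have hdef : (odot (compl y) y).isSome := by
    rw [h.odot_defined, h.compl_compl]; exact h.le_refl y
  obtain ⟨v, hv⟩ := Option.isSome_iff_exists.mp hdef
  -- RHS of adjointness (x := y', z := 0) holds trivially
  have hrhs : setLE le (lcone le (ucone le {compl y, compl y}))
      (ucone le (imp y zero)) := by
    intro t ht u hu
    rw [h.imp_zero] at hu
    exact ht u (by intro s hs; rcases hs with rfl | hs; · exact hu (compl y) rfl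
                   · rcases hs with rfl; exact hu (compl y) rfl)
  have hlhs := (h.adjoint (compl y) y zero).mpr hrhs
  -- v is a lower bound of the product set
  have hvL : v ∈ lcone le (odotLSet odot (ucone le {compl y, compl y}) y) := by
    intro w hw
    obtain ⟨s, hs, hsw⟩ := hw
    have hys : le (compl y) s := hs (compl y) (Or.inl rfl)
    exact h.odot_mono (compl y) s y v w (h.le_refl (compl y)) hys hv hsw
  have h0U : zero ∈ ucone le (lcone le {y, zero}) := by
    intro t ht; exact ht zero (Or.inr rfl)
  have hv0 : le v zero := hlhs v hvL zero h0U
  rw [hv, h.le_antisymm v zero hv0 (h.zero_le v)]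

/-- Uniqueness: `y ⊙ w = 0` and `y' ≤ w` imply `w = y'`. -/
lemma IsCURP.odot_eq_zero_unique (h : IsCURP le odot imp compl zero one)
    (y w : E) (hz : odot y w = some zero) (hw : le (compl y) w) : w = compl y := by
  -- LHS of adjointness (x := w, z := 0) holds since 0 is in the product set
  have hlhs : setLE le (lcone le (odotLSet odot (ucone le {w, compl y}) y))
      (ucone le (lcone le {y, zero})) := by
    intro t ht u hu
    have h0mem : zero ∈ odotLSet odot (ucone le {w, compl y}) y := by
      refine ⟨w, ?_, by rw [h.odot_comm]; exact hz⟩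
      intro s hs; rcases hs with rfl | hs; · exact h.le_refl _
      · rcases hs with rfl; exact hw
    have ht0 : le t zero := ht zero h0mem
    have h0u : le zero u := hu zero (by intro s hs; rcases hs with rfl | hs
                                        · exact h.zero_le _
                                        · rcases hs with rfl; exact h.le_refl _)
    exact h.le_trans t zero u ht0 h0u
  have hrhs := (h.adjoint w y zero).mp hlhs
  have hwL : w ∈ lcone le (ucone le {w, compl y}) := by
    intro u hu; exact hu w (Or.inl rfl)
  have hyU : compl y ∈ ucone le (imp y zero) := by
    rw [h.imp_zero]; intro s hs; rcases hs with rfl; exact h.le_refl (compl y)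
  exact h.le_antisymm w (compl y) (hrhs w hwL (compl y) hyU) hw

end Aux

/-- The induced order of the effect algebra obtained from a commutative unsharp
residuated poset coincides with the original order. -/
theorem stmt11 (le : E → E → Prop) (odot : E → E → Option E) (imp : E → E → Set E)
    (compl : E → E) (zero one : E)
    (h : IsCURP le odot imp compl zero one) :
    ∀ a b : E, eaLe (fun x y => (odot (compl x) (compl y)).map compl) a b ↔ le a b := by
  intro a b
  constructor
  · rintro ⟨z, hz⟩
    obtain ⟨w, hw, hwb⟩ := Option.map_eq_some_iff.mp hz
    have haz : le a (compl z) := by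
      have := (h.odot_defined (compl a) (compl z)).mp (by rw [hw]; exact rfl)
      rwa [h.compl_compl] at this
    have hw2 : odot (compl z) (compl a) = some w := by rw [h.odot_comm]; exact hw
    have hmono : le w (compl a) := by
      refine h.odot_mono (compl z) one (compl a) w (compl a) ?_ (h.le_one _) hw2
        (h.one_odot (compl a))
      rwa [h.compl_compl]
    have := h.compl_antitone w (compl a) hmono
    rwa [h.compl_compl, hwb] at this
  · intro hab
    have hdef : (odot (compl a) b).isSome := by
      rw [h.odot_defined, h.compl_compl]; exact hab
    obtain ⟨d, hd⟩ := Option.isSome_iff_exists.mp hdef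
    -- step 1: b ⊙ d' = a
    have hdd : odot d (compl d) = some zero := by
      rw [h.odot_comm]; exact h.odot_compl_self d
    have hassoc1 := h.odot_assoc (compl a) b (compl d)
    rw [hd, Option.bind_some, hdd] at hassoc1
    obtain ⟨v, hv, hav⟩ := Option.bind_eq_some_iff.mp hassoc1.symm
    have havle : le a v := by
      have := (h.odot_defined (compl a) v).mp (by rw [hav]; exact rfl)
      rwa [h.compl_compl] at this
    have hveq : v = a := by
      have := h.odot_eq_zero_unique (compl a) v hav (by rwa [h.compl_compl])
      rw [this, h.compl_compl]
    rw [hveq] at hv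
    -- step 2: d' ⊙ a' = b'
    have haa : odot a (compl a) = some zero := by
      have := h.odot_compl_self (compl a); rwa [h.compl_compl] at this
    have hassoc2 := h.odot_assoc b (compl d) (compl a)
    rw [hv] at hassoc2
    rw [Option.bind_some, haa] at hassoc2
    obtain ⟨u, hu, hbu⟩ := Option.bind_eq_some_iff.mp hassoc2.symm
    have hueq : u = compl b := by
      refine h.odot_eq_zero_unique b u hbu ?_
      exact (h.odot_defined b u).mp (by rw [hbu]; exact rfl)
    rw [hueq] at hu
    refine ⟨d, ?_⟩
    show (odot (compl a) (compl d)).map compl = some b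
    rw [h.odot_comm, hu, Option.map_some, h.compl_compl]

end Paper
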